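/- arXiv:2201.12134 — 5 statements merged into one kernel-verified Lean document; each statement's English description precedes it below -/
import Mathlib

section
/- Let q : ℕ → ℝ be nonnegative and nonincreasing with q_1 > 0, let s : ℕ → ℝ, set Q_n := ∑_{j=1}^{n-1} q_j and σ_j := (1/j)·∑_{k=1}^{j} s_k. Then for every n ≥ 2, |(1/Q_n)·∑_{j=1}^{n-1} q_j s_j| ≤ sup_{1 ≤ j ≤ n-1} |σ_j|. -/
lemma abel_invariant (q s : ℕ → ℝ) (hq0 : ∀ j, 0 ≤ q j) (hmono : ∀ j, q (j+1) ≤ q j)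
    (M : ℝ) (m : ℕ) (hS : ∀ j ∈ Finset.Icc 1 m, |∑ k ∈ Finset.Icc 1 j, s k| ≤ j * M) :
    |∑ j ∈ Finset.Icc 1 m, q j * s j - q (m+1) * ∑ k ∈ Finset.Icc 1 m, s k|
      ≤ M * (∑ j ∈ Finset.Icc 1 m, q j - m * q (m+1)) := by
  induction m with
  | zero => simp
  | succ m ih =>
    have hIH := ih (fun j hj => hS j (Finset.Icc_subset_Icc_right (Nat.le_succ m) hj))
    have h1 : (1:ℕ) ≤ m + 1 := Nat.succ_le_succ (Nat.zero_le m)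
    rw [Finset.sum_Icc_succ_top h1, Finset.sum_Icc_succ_top h1, Finset.sum_Icc_succ_top h1]
    have key : ∑ j ∈ Finset.Icc 1 m, q j * s j + q (m+1) * s (m+1)
        - q (m+1+1) * (∑ k ∈ Finset.Icc 1 m, s k + s (m+1))
        = (∑ j ∈ Finset.Icc 1 m, q j * s j - q (m+1) * ∑ k ∈ Finset.Icc 1 m, s k)
          + (q (m+1) - q (m+1+1)) * (∑ k ∈ Finset.Icc 1 m, s k + s (m+1)) := by ring
    rw [key]
    have hS1 : |∑ k ∈ Finset.Icc 1 m, s k + s (m+1)| ≤ (m+1 : ℕ) * M := by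
      have := hS (m+1) (Finset.mem_Icc.mpr ⟨h1, le_refl _⟩)
      rwa [Finset.sum_Icc_succ_top h1] at this
    have hqd : 0 ≤ q (m+1) - q (m+1+1) := sub_nonneg.mpr (hmono (m+1))
    calc |(∑ j ∈ Finset.Icc 1 m, q j * s j - q (m+1) * ∑ k ∈ Finset.Icc 1 m, s k)
          + (q (m+1) - q (m+1+1)) * (∑ k ∈ Finset.Icc 1 m, s k + s (m+1))|
        ≤ |∑ j ∈ Finset.Icc 1 m, q j * s j - q (m+1) * ∑ k ∈ Finset.Icc 1 m, s k|
          + |(q (m+1) - q (m+1+1)) * (∑ k ∈ Finset.Icc 1 m, s k + s (m+1))| := abs_add_le _ _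
      _ ≤ M * (∑ j ∈ Finset.Icc 1 m, q j - m * q (m+1))
          + (q (m+1) - q (m+1+1)) * ((m+1 : ℕ) * M) := by
          refine add_le_add hIH ?_
          rw [abs_mul, abs_of_nonneg hqd]
          exact mul_le_mul_of_nonneg_left hS1 hqd
      _ = M * (∑ j ∈ Finset.Icc 1 m, q j + q (m+1) - (m+1 : ℕ) * q (m+1+1)) := by
          push_cast; ring

theorem Tmean_dominated_by_Fejer_max_nonincreasing
    (q : ℕ → ℝ) (hq0 : ∀ j, 0 ≤ q j) (hmono : ∀ j, q (j+1) ≤ q j) (hq1 : 0 < q 1)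
    (s : ℕ → ℝ) (n : ℕ) (hn : 2 ≤ n) :
    |(1 / (∑ j ∈ Finset.Icc 1 (n-1), q j)) * ∑ j ∈ Finset.Icc 1 (n-1), q j * s j| ≤
      (Finset.Icc 1 (n-1)).sup' (Finset.nonempty_Icc.mpr (by omega))
        (fun j => |(1 / (j : ℝ)) * ∑ k ∈ Finset.Icc 1 j, s k|) := by
  set m := n - 1 with hm
  have hm1 : 1 ≤ m := by omega
  set M := (Finset.Icc 1 m).sup' (Finset.nonempty_Icc.mpr (by omega))
      (fun j => |(1 / (j : ℝ)) * ∑ k ∈ Finset.Icc 1 j, s k|) with hM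
  have hS : ∀ j ∈ Finset.Icc 1 m, |∑ k ∈ Finset.Icc 1 j, s k| ≤ j * M := by
    intro j hj
    have hj1 : 1 ≤ j := (Finset.mem_Icc.mp hj).1
    have hjpos : (0:ℝ) < j := by exact_mod_cast hj1
    have h := Finset.le_sup' (fun j : ℕ => |(1 / (j : ℝ)) * ∑ k ∈ Finset.Icc 1 j, s k|) hj
    rw [abs_mul, abs_of_nonneg (by positivity : (0:ℝ) ≤ 1 / (j:ℝ))] at h
    have : |∑ k ∈ Finset.Icc 1 j, s k| = (j:ℝ) * (1 / (j:ℝ) * |∑ k ∈ Finset.Icc 1 j, s k|) := by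
      field_simp
    rw [this]
    exact mul_le_mul_of_nonneg_left h (le_of_lt hjpos)
  have Sm : |∑ k ∈ Finset.Icc 1 m, s k| ≤ m * M := hS m (Finset.mem_Icc.mpr ⟨hm1, le_refl _⟩)
  have key := abel_invariant q s hq0 hmono M m hS
  have hQpos : 0 < ∑ j ∈ Finset.Icc 1 m, q j := by
    have h1m : (1:ℕ) ∈ Finset.Icc 1 m := Finset.mem_Icc.mpr ⟨le_refl _, hm1⟩
    exact lt_of_lt_of_le hq1 (Finset.single_le_sum (fun j _ => hq0 j) h1m)
  have hT : |∑ j ∈ Finset.Icc 1 m, q j * s j| ≤ M * ∑ j ∈ Finset.Icc 1 m, q j := by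
    calc |∑ j ∈ Finset.Icc 1 m, q j * s j|
        = |(∑ j ∈ Finset.Icc 1 m, q j * s j - q (m+1) * ∑ k ∈ Finset.Icc 1 m, s k)
            + q (m+1) * ∑ k ∈ Finset.Icc 1 m, s k| := by
          congr 1; ring
      _ ≤ |∑ j ∈ Finset.Icc 1 m, q j * s j - q (m+1) * ∑ k ∈ Finset.Icc 1 m, s k|
            + |q (m+1) * ∑ k ∈ Finset.Icc 1 m, s k| := abs_add_le _ _
      _ ≤ M * (∑ j ∈ Finset.Icc 1 m, q j - m * q (m+1)) + q (m+1) * (m * M) := by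
          refine add_le_add key ?_
          rw [abs_mul, abs_of_nonneg (hq0 (m+1))]
          exact mul_le_mul_of_nonneg_left Sm (hq0 (m+1))
      _ = M * ∑ j ∈ Finset.Icc 1 m, q j := by ring
  rw [abs_mul, abs_of_nonneg (by positivity : (0:ℝ) ≤ 1 / ∑ j ∈ Finset.Icc 1 m, q j)]
  rw [div_mul_eq_mul_div, one_mul, div_le_iff₀ hQpos]
  linarith [hT]
end

section
/- Let 0 < p < 1/2 and let M : ℕ → ℝ satisfy M_0 ≥ 1 and M_{l+1} ≥ 2·M_l for all l. Then there exists a constant C_p > 0 depending only on p such that for every N ≥ 2, ∑_{k=0}^{N-2} ∑_{l=k+1}^{N-1} (M_l · M_k)^p / M_l ≤ C_p. -/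
open Finset

private lemma geo_finset_le (r : ℝ) (h0 : 0 ≤ r) (h1 : r < 1) (s : Finset ℕ) :
    ∑ i ∈ s, r ^ i ≤ (1 - r)⁻¹ :=
  sum_le_hasSum s (fun i _ => pow_nonneg h0 i) (hasSum_geometric_of_lt_one h0 h1)

theorem double_sum_kernel_estimate (p : ℝ) (hp : 0 < p) (hp2 : p < 1/2) :
    ∃ C : ℝ, 0 < C ∧ ∀ M : ℕ → ℝ, 1 ≤ M 0 → (∀ l, 2 * M l ≤ M (l+1)) →
      ∀ N : ℕ, 2 ≤ N →
        ∑ k ∈ Finset.range (N-1), ∑ l ∈ Finset.Icc (k+1) (N-1),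
          (M l * M k) ^ p / M l ≤ C := by
  set r : ℝ := (2:ℝ) ^ (p - 1) with hr
  set s : ℝ := (2:ℝ) ^ (2*p - 1) with hs
  have hr0 : 0 < r := Real.rpow_pos_of_pos (by norm_num) _
  have hs0 : 0 < s := Real.rpow_pos_of_pos (by norm_num) _
  have hr1 : r < 1 := Real.rpow_lt_one_of_one_lt_of_neg (by norm_num) (by linarith)
  have hs1 : s < 1 := Real.rpow_lt_one_of_one_lt_of_neg (by norm_num) (by linarith)
  refine ⟨(1 - r)⁻¹ * (1 - s)⁻¹, mul_pos (inv_pos.mpr (by linarith)) (inv_pos.mpr (by linarith)), ?_⟩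
  intro M hM0 hMstep N hN
  -- positivity and growth of M
  have hMpos : ∀ k, 0 < M k := by
    intro k
    induction k with
    | zero => linarith
    | succ n ih => nlinarith [hMstep n]
  have hgrow : ∀ k j, (2:ℝ) ^ j * M k ≤ M (k + j) := by
    intro k j
    induction j with
    | zero => simp
    | succ n ih =>
      have := hMstep (k + n)
      calc (2:ℝ) ^ (n+1) * M k = 2 * ((2:ℝ)^n * M k) := by ring
        _ ≤ 2 * M (k + n) := by nlinarith [hMpos k, pow_pos (show (0:ℝ) < 2 by norm_num) n]
        _ ≤ M (k + n + 1) := this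
  have hMlow : ∀ k, (2:ℝ) ^ k ≤ M k := by
    intro k
    have := hgrow 0 k
    simp at this
    nlinarith [pow_pos (show (0:ℝ) < 2 by norm_num) k]
  -- termwise bound
  have hterm : ∀ k l, k + 1 ≤ l → (M l * M k) ^ p / M l ≤ s ^ k * r ^ (l - k) := by
    intro k l hkl
    have hMl := hMpos l
    have hMk := hMpos k
    have h1 : (M l * M k) ^ p / M l = M l ^ (p - 1) * M k ^ p := by
      rw [Real.mul_rpow hMl.le hMk.le, Real.rpow_sub hMl, Real.rpow_one]
      ring
    have hle : (2:ℝ) ^ (l - k) * M k ≤ M l := by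
      have := hgrow k (l - k)
      rwa [Nat.add_sub_cancel' (by omega : k ≤ l)] at this
    have h2 : M l ^ (p - 1) ≤ ((2:ℝ) ^ (l - k) * M k) ^ (p - 1) :=
      Real.rpow_le_rpow_of_nonpos (by positivity) hle (by linarith)
    have h3 : ((2:ℝ) ^ (l - k) * M k) ^ (p - 1) = r ^ (l - k) * M k ^ (p - 1) := by
      rw [Real.mul_rpow (by positivity) hMk.le, ← Real.rpow_natCast (2:ℝ) (l - k),
        ← Real.rpow_natCast r (l - k), hr, ← Real.rpow_mul (by norm_num),
        ← Real.rpow_mul (by norm_num), mul_comm (p-1)]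
    have h4 : M k ^ (p - 1) * M k ^ p = M k ^ (2*p - 1) := by
      rw [← Real.rpow_add hMk]; ring_nf
    have h5 : M k ^ (2*p - 1) ≤ s ^ k := by
      have := Real.rpow_le_rpow_of_nonpos (x := (2:ℝ)^k) (by positivity) (hMlow k)
        (by linarith : 2*p - 1 ≤ 0)
      calc M k ^ (2*p-1) ≤ ((2:ℝ)^k) ^ (2*p-1) := this
        _ = s ^ k := by
          rw [← Real.rpow_natCast (2:ℝ) k, ← Real.rpow_natCast s k, hs,
            ← Real.rpow_mul (by norm_num), ← Real.rpow_mul (by norm_num), mul_comm (2*p-1)]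
    calc (M l * M k) ^ p / M l = M l ^ (p-1) * M k ^ p := h1
      _ ≤ (r ^ (l - k) * M k ^ (p - 1)) * M k ^ p := by
          rw [← h3]
          exact mul_le_mul_of_nonneg_right h2 (Real.rpow_nonneg hMk.le p)
      _ = r ^ (l - k) * (M k ^ (p - 1) * M k ^ p) := by ring
      _ = r ^ (l - k) * M k ^ (2*p - 1) := by rw [h4]
      _ ≤ r ^ (l - k) * s ^ k := by
          exact mul_le_mul_of_nonneg_left h5 (pow_nonneg hr0.le _)
      _ = s ^ k * r ^ (l - k) := by ring
  -- inner sum bound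
  have hinner : ∀ k, ∑ l ∈ Icc (k+1) (N-1), r ^ (l - k) ≤ (1 - r)⁻¹ := by
    intro k
    have himg : ∑ l ∈ Icc (k+1) (N-1), r ^ (l - k)
        = ∑ j ∈ (Icc (k+1) (N-1)).image (· - k), r ^ j := by
      rw [Finset.sum_image]
      intro a ha b hb hab
      simp only [mem_Icc, coe_Icc, Set.mem_Icc] at ha hb hab
      omega
    rw [himg]
    exact geo_finset_le r hr0.le hr1 _
  calc ∑ k ∈ Finset.range (N-1), ∑ l ∈ Finset.Icc (k+1) (N-1), (M l * M k) ^ p / M l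
      ≤ ∑ k ∈ Finset.range (N-1), s ^ k * (1 - r)⁻¹ := by
        apply Finset.sum_le_sum
        intro k _
        calc ∑ l ∈ Icc (k+1) (N-1), (M l * M k) ^ p / M l
            ≤ ∑ l ∈ Icc (k+1) (N-1), s ^ k * r ^ (l - k) := by
              apply Finset.sum_le_sum
              intro l hl
              exact hterm k l (mem_Icc.mp hl).1
          _ = s ^ k * ∑ l ∈ Icc (k+1) (N-1), r ^ (l - k) := by rw [Finset.mul_sum]
          _ ≤ s ^ k * (1 - r)⁻¹ :=
              mul_le_mul_of_nonneg_left (hinner k) (pow_nonneg hs0.le _)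
    _ = (∑ k ∈ Finset.range (N-1), s ^ k) * (1 - r)⁻¹ := by rw [← Finset.sum_mul]
    _ ≤ (1 - s)⁻¹ * (1 - r)⁻¹ := by
        apply mul_le_mul_of_nonneg_right (geo_finset_le s hs0.le hs1 _)
        simp [inv_nonneg]; linarith
    _ = (1 - r)⁻¹ * (1 - s)⁻¹ := by ring
end

section
/- With the Walsh functions w_k and Dirichlet kernels D_m(x) = ∑_{k=0}^{m-1} w_k(x) as above, for every n : ℕ, every j < 2^n, and every x : ℕ → ZMod 2, D_{2^n − j}(x) = D_{2^n}(x) − w_{2^n − 1}(x) · D_j(x). -/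
/-- Walsh–Paley function on the dyadic group, as an integer-valued function. -/
def walsh (k : ℕ) (x : ℕ → ZMod 2) : ℤ :=
  (-1) ^ (∑ i ∈ Finset.range k.size, (if k.testBit i then 1 else 0) * (x i).val)

/-- Walsh–Dirichlet kernel `D_m = ∑_{k<m} w_k`. -/
def walshDirichlet (m : ℕ) (x : ℕ → ZMod 2) : ℤ :=
  ∑ k ∈ Finset.range m, walsh k x

lemma walsh_eq_of_le {k N : ℕ} (h : k.size ≤ N) (x : ℕ → ZMod 2) :
    walsh k x = (-1) ^ (∑ i ∈ Finset.range N, (if k.testBit i then 1 else 0) * (x i).val) := by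
  unfold walsh
  congr 1
  apply Finset.sum_subset (Finset.range_subset_range.2 h)
  intro i _ hi
  have hik : k.size ≤ i := by simpa using hi
  have : k.testBit i = false := by
    apply Nat.testBit_lt_two_pow
    exact lt_of_lt_of_le (Nat.lt_size_self k) (Nat.pow_le_pow_right (by norm_num) hik)
  simp [this]

lemma walsh_mul (a b : ℕ) (x : ℕ → ZMod 2) :
    walsh a x * walsh b x = walsh (a ^^^ b) x := by
  set N := max (max a.size b.size) (a ^^^ b).size with hN
  rw [walsh_eq_of_le (k := a) (N := N) (by omega) x,
      walsh_eq_of_le (k := b) (N := N) (by omega) x,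
      walsh_eq_of_le (k := a ^^^ b) (N := N) (by omega) x]
  rw [← Finset.prod_pow_eq_pow_sum, ← Finset.prod_pow_eq_pow_sum,
      ← Finset.prod_pow_eq_pow_sum, ← Finset.prod_mul_distrib]
  apply Finset.prod_congr rfl
  intro i _
  have hx : (a ^^^ b).testBit i = ((a.testBit i) ^^ (b.testBit i)) := Nat.testBit_xor a b i
  rcases ha : a.testBit i <;> rcases hb : b.testBit i <;>
    simp [hx, ha, hb, ← pow_add]

lemma xor_two_pow_sub_one {n i : ℕ} (hi : i < 2 ^ n) :
    (2 ^ n - 1) ^^^ i = 2 ^ n - 1 - i := by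
  apply Nat.eq_of_testBit_eq
  intro t
  rw [Nat.testBit_xor, Nat.testBit_two_pow_sub_one,
      show 2 ^ n - 1 - i = 2 ^ n - (i + 1) from by omega,
      Nat.testBit_two_pow_sub_succ hi t]
  by_cases ht : t < n
  · cases hmt : i.testBit t <;> simp [ht, hmt]
  · have h2 : i.testBit t = false := by
      apply Nat.testBit_lt_two_pow
      exact lt_of_lt_of_le hi (Nat.pow_le_pow_right (by norm_num) (by omega))
    simp [ht, h2]

theorem walshDirichlet_sub (n j : ℕ) (hj : j < 2^n) (x : ℕ → ZMod 2) :
    walshDirichlet (2^n - j) x =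
      walshDirichlet (2^n) x - walsh (2^n - 1) x * walshDirichlet j x := by
  have hpow : 0 < 2 ^ n := Nat.two_pow_pos n
  have hsub : walshDirichlet (2^n) x - walshDirichlet (2^n - j) x
      = ∑ k ∈ Finset.Ico (2^n - j) (2^n), walsh k x := by
    rw [Finset.sum_Ico_eq_sub _ (by omega)]
    rfl
  have hre : ∑ k ∈ Finset.Ico (2^n - j) (2^n), walsh k x
      = ∑ i ∈ Finset.range j, walsh (2^n - 1 - i) x := by
    apply Finset.sum_nbij' (fun k => 2^n - 1 - k) (fun i => 2^n - 1 - i)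
    · intro a ha
      simp only [Finset.mem_Ico] at ha
      simp only [Finset.mem_range]
      omega
    · intro a ha
      simp only [Finset.mem_range] at ha
      simp only [Finset.mem_Ico]
      omega
    · intro a ha
      simp only [Finset.mem_Ico] at ha
      omega
    · intro a ha
      simp only [Finset.mem_range] at ha
      omega
    · intro a ha
      simp only [Finset.mem_Ico] at ha
      congr 1
      omega
  have hterm : ∀ i ∈ Finset.range j, walsh (2^n - 1 - i) x = walsh (2^n - 1) x * walsh i x := by
    intro i hi
    simp only [Finset.mem_range] at hi
    rw [walsh_mul, xor_two_pow_sub_one (by omega)]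
  rw [Finset.sum_congr rfl hterm, ← Finset.mul_sum] at hre
  have : walshDirichlet (2^n) x - walshDirichlet (2^n - j) x
      = walsh (2^n - 1) x * walshDirichlet j x := by
    rw [hsub, hre]; rfl
  linarith
end

section
/- With the Walsh Dirichlet kernels D_m(x) = ∑_{k=0}^{m-1} w_k(x), set l_N := ∑_{k=1}^{N-1} 1/k, and define the Nörlund logarithmic kernel P_N(x) := (1/l_N)·∑_{k=1}^{N-1} D_k(x)/(N−k) and the Riesz logarithmic kernel Y_N(x) := (1/l_N)·∑_{k=1}^{N-1} D_k(x)/k. Then for every n ≥ 1 and every x : ℕ → ZMod 2, P_{2^n}(x) = D_{2^n}(x) − w_{2^n − 1}(x) · Y_{2^n}(x). -/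
lemma walsh_eq_range (k n : ℕ) (hk : k < 2 ^ n) (x : ℕ → ZMod 2) :
    walsh k x = (-1) ^ (∑ i ∈ Finset.range n, (if k.testBit i then 1 else 0) * (x i).val) := by
  unfold walsh
  congr 1
  apply Finset.sum_subset
  · intro i hi
    simp only [Finset.mem_range] at *
    exact lt_of_lt_of_le hi (Nat.size_le.2 hk)
  · intro i _ hi
    simp only [Finset.mem_range, not_lt] at hi
    have : ¬ k.testBit i := by
      simp [Nat.testBit_eq_false_of_lt (lt_of_lt_of_le (Nat.lt_size_self k)
        (Nat.pow_le_pow_right (by norm_num) hi))]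
    simp [this]

lemma walsh_mul_self (j : ℕ) (x : ℕ → ZMod 2) : walsh j x * walsh j x = 1 := by
  unfold walsh
  rw [← pow_add]
  exact Even.neg_one_pow ⟨_, rfl⟩

lemma walsh_compl_mul (n j : ℕ) (hj : j < 2 ^ n) (x : ℕ → ZMod 2) :
    walsh (2 ^ n - 1 - j) x * walsh j x = walsh (2 ^ n - 1) x := by
  have hpos : 0 < 2 ^ n := Nat.pow_pos (by norm_num)
  have h1 : 2 ^ n - 1 - j < 2 ^ n := lt_of_le_of_lt (by omega) (Nat.sub_lt hpos one_pos)
  have h2 : 2 ^ n - 1 < 2 ^ n := Nat.sub_lt hpos one_pos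
  rw [walsh_eq_range _ n h1 x, walsh_eq_range _ n h2 x, walsh_eq_range _ n hj x, ← pow_add,
    ← Finset.sum_add_distrib]
  congr 1
  apply Finset.sum_congr rfl
  intro i hi
  simp only [Finset.mem_range] at hi
  have hsub : 2 ^ n - 1 - j = 2 ^ n - (j + 1) := by omega
  rw [hsub, Nat.testBit_two_pow_sub_succ hj, Nat.testBit_two_pow_sub_one]
  simp only [hi, decide_true, Bool.true_and]
  by_cases hb : j.testBit i <;> simp [hb]

lemma walsh_compl (n j : ℕ) (hj : j < 2 ^ n) (x : ℕ → ZMod 2) :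
    walsh (2 ^ n - 1 - j) x = walsh (2 ^ n - 1) x * walsh j x := by
  have h := walsh_compl_mul n j hj x
  calc walsh (2 ^ n - 1 - j) x
      = walsh (2 ^ n - 1 - j) x * (walsh j x * walsh j x) := by rw [walsh_mul_self]; ring
    _ = (walsh (2 ^ n - 1 - j) x * walsh j x) * walsh j x := by ring
    _ = walsh (2 ^ n - 1) x * walsh j x := by rw [h]

lemma dirichlet_sub (n k : ℕ) (hk1 : 1 ≤ k) (hk2 : k ≤ 2 ^ n) (x : ℕ → ZMod 2) :
    walshDirichlet (2 ^ n - k) x =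
      walshDirichlet (2 ^ n) x - walsh (2 ^ n - 1) x * walshDirichlet k x := by
  have hsplit : walshDirichlet (2 ^ n) x =
      walshDirichlet (2 ^ n - k) x + ∑ j ∈ Finset.Ico (2 ^ n - k) (2 ^ n), walsh j x := by
    unfold walshDirichlet
    exact (Finset.sum_range_add_sum_Ico (fun j => walsh j x) (Nat.sub_le _ _)).symm
  have hre : ∑ j ∈ Finset.Ico (2 ^ n - k) (2 ^ n), walsh j x =
      ∑ m ∈ Finset.range k, walsh (2 ^ n - 1 - m) x := by
    apply Finset.sum_nbij' (fun j => 2 ^ n - 1 - j) (fun m => 2 ^ n - 1 - m)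
    · intro j hj; simp only [Finset.mem_Ico] at hj; simp only [Finset.mem_range]; omega
    · intro m hm; simp only [Finset.mem_range] at hm; simp only [Finset.mem_Ico]; omega
    · intro j hj; simp only [Finset.mem_Ico] at hj; omega
    · intro m hm; simp only [Finset.mem_range] at hm; omega
    · intro j hj; simp only [Finset.mem_Ico] at hj; congr 1; omega
  have hmul : ∑ m ∈ Finset.range k, walsh (2 ^ n - 1 - m) x =
      walsh (2 ^ n - 1) x * walshDirichlet k x := by
    unfold walshDirichlet
    rw [Finset.mul_sum]
    apply Finset.sum_congr rfl
    intro m hm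
    simp only [Finset.mem_range] at hm
    exact walsh_compl n m (lt_of_lt_of_le hm hk2) x
  rw [hre, hmul] at hsplit
  linarith

theorem norlund_log_kernel_eq (n : ℕ) (hn : 1 ≤ n) (x : ℕ → ZMod 2) :
    (1 / ∑ k ∈ Finset.Icc 1 (2^n - 1 : ℕ), (1 : ℝ) / (k : ℝ)) *
        ∑ k ∈ Finset.Icc 1 (2^n - 1 : ℕ), (walshDirichlet k x : ℝ) / ((2^n : ℝ) - (k : ℝ)) =
      (walshDirichlet (2^n) x : ℝ) -
        (walsh (2^n - 1) x : ℝ) *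
          ((1 / ∑ k ∈ Finset.Icc 1 (2^n - 1 : ℕ), (1 : ℝ) / (k : ℝ)) *
            ∑ k ∈ Finset.Icc 1 (2^n - 1 : ℕ), (walshDirichlet k x : ℝ) / (k : ℝ)) := by
  have h2n : 2 ≤ 2 ^ n := by
    calc 2 = 2 ^ 1 := rfl
    _ ≤ 2 ^ n := Nat.pow_le_pow_right (by norm_num) hn
  set N := 2 ^ n with hN
  set L : ℝ := ∑ k ∈ Finset.Icc 1 (N - 1 : ℕ), (1 : ℝ) / (k : ℝ) with hL
  have hLpos : 0 < L := by
    apply Finset.sum_pos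
    · intro k hk
      simp only [Finset.mem_Icc] at hk
      have : (0:ℝ) < k := by exact_mod_cast Nat.lt_of_lt_of_le Nat.zero_lt_one hk.1
      positivity
    · exact ⟨1, by simp only [Finset.mem_Icc]; omega⟩
  -- reindex the Nörlund sum by k ↦ N - k
  have hre : ∑ k ∈ Finset.Icc 1 (N - 1 : ℕ), (walshDirichlet k x : ℝ) / ((N : ℝ) - (k : ℝ)) =
      ∑ k ∈ Finset.Icc 1 (N - 1 : ℕ), (walshDirichlet (N - k) x : ℝ) / (k : ℝ) := by
    apply Finset.sum_nbij' (fun k => N - k) (fun k => N - k)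
    · intro k hk; simp only [Finset.mem_Icc] at *; omega
    · intro k hk; simp only [Finset.mem_Icc] at *; omega
    · intro k hk; simp only [Finset.mem_Icc] at hk; omega
    · intro k hk; simp only [Finset.mem_Icc] at hk; omega
    · intro k hk
      simp only [Finset.mem_Icc] at hk
      have h2 : ((N - k : ℕ) : ℝ) = (N : ℝ) - (k : ℝ) := by
        rw [Nat.cast_sub (by omega)]
      rw [show N - (N - k) = k from by omega, h2]
  rw [show ((2:ℝ)^n) = ((N:ℕ):ℝ) by push_cast [hN]; ring, hre]
  have hval : ∀ k ∈ Finset.Icc 1 (N - 1 : ℕ),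
      (walshDirichlet (N - k) x : ℝ) / (k : ℝ) =
        (walshDirichlet N x : ℝ) * (1 / (k : ℝ)) -
          (walsh (N - 1) x : ℝ) * ((walshDirichlet k x : ℝ) / (k : ℝ)) := by
    intro k hk
    simp only [Finset.mem_Icc] at hk
    rw [dirichlet_sub n k hk.1 (by omega) x]
    push_cast
    ring
  rw [Finset.sum_congr rfl hval, Finset.sum_sub_distrib, ← Finset.mul_sum, ← Finset.mul_sum]
  rw [← hL]
  field_simp
end

section
/- Fix N : ℕ and 1 ≤ n ≤ 2^N. On G = (Fin N → ZMod 2) define Walsh functions w_k(x) = (−1)^{∑_{i<N} b_i(k)·(x i).val} (for k < 2^N), Dirichlet kernels D_j(x) = ∑_{k=0}^{j−1} w_k(x), and the Fejér kernel K_n(x) := (1/n)·∑_{j=0}^{n−1} D_j(x). Then (1/2^N)·∑_{x ∈ G} |K_n(x)| ≤ 2. -/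
open Finset

def walshW (N k : ℕ) (x : Fin N → ZMod 2) : ℤ :=
  (-1 : ℤ) ^ (∑ i : Fin N, (if Nat.testBit k (i : ℕ) then 1 else 0) * (x i).val)

def walshD (N j : ℕ) (x : Fin N → ZMod 2) : ℤ := ∑ k ∈ Finset.range j, walshW N k x

def walshS (N n : ℕ) (x : Fin N → ZMod 2) : ℤ := ∑ j ∈ Finset.range n, walshD N j x

lemma walshW_eq_one_or (N k : ℕ) (x : Fin N → ZMod 2) :
    walshW N k x = 1 ∨ walshW N k x = -1 := by
  unfold walshW
  rcases Nat.even_or_odd (∑ i : Fin N, (if Nat.testBit k (i : ℕ) then 1 else 0) * (x i).val) with h | h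
  · left; exact h.neg_one_pow
  · right; exact h.neg_one_pow

lemma walshW_split (N m j : ℕ) (hj : j < 2 ^ m) (x : Fin N → ZMod 2) :
    walshW N (2 ^ m + j) x = walshW N (2 ^ m) x * walshW N j x := by
  unfold walshW
  rw [← pow_add]
  congr 1
  rw [← Finset.sum_add_distrib]
  apply Finset.sum_congr rfl
  intro i _
  have hbit : Nat.testBit (2 ^ m + j) (i : ℕ) =
      (Nat.testBit (2 ^ m) (i : ℕ) || Nat.testBit j (i : ℕ)) := by
    rcases lt_trichotomy (i : ℕ) m with h | h | h
    · rw [Nat.testBit_two_pow_add_gt h, Nat.testBit_two_pow_of_ne (Nat.ne_of_gt h)]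
      simp
    · rw [h, Nat.testBit_two_pow_add_eq, Nat.testBit_lt_two_pow hj,
        Nat.testBit_two_pow_self]
      simp [Nat.testBit_lt_two_pow hj]
    · have h1 : 2 ^ m + j < 2 ^ (i : ℕ) := by
        have : 2 ^ m + j < 2 ^ (m + 1) := by
          rw [pow_succ]; omega
        exact lt_of_lt_of_le this (Nat.pow_le_pow_right (by norm_num) h)
      rw [Nat.testBit_lt_two_pow h1, Nat.testBit_two_pow_of_ne (Nat.ne_of_lt h),
        Nat.testBit_lt_two_pow (lt_trans hj (Nat.pow_lt_pow_right (by norm_num) h))]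
      simp
  rw [hbit]
  rcases hb1 : Nat.testBit (2 ^ m) (i : ℕ) with _ | _ <;>
    rcases hb2 : Nat.testBit j (i : ℕ) with _ | _ <;> simp
  · -- both true: impossible
    exfalso
    have := Nat.testBit_two_pow (n := m) (m := (i : ℕ))
    rw [hb1] at this
    have him : m = (i : ℕ) := by simpa using this.symm
    rw [← him] at hb2
    rw [Nat.testBit_lt_two_pow hj] at hb2
    exact Bool.noConfusion hb2

lemma walshD_split (N m j : ℕ) (hj : j ≤ 2 ^ m) (x : Fin N → ZMod 2) :
    walshD N (2 ^ m + j) x = walshD N (2 ^ m) x + walshW N (2 ^ m) x * walshD N j x := by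
  unfold walshD
  rw [Finset.sum_range_add, Finset.mul_sum]
  congr 1
  apply Finset.sum_congr rfl
  intro k hk
  rw [Finset.mem_range] at hk
  exact walshW_split N m k (lt_of_lt_of_le hk hj) x

lemma walshD_nonneg (N m : ℕ) (x : Fin N → ZMod 2) : 0 ≤ walshD N (2 ^ m) x := by
  induction m with
  | zero =>
    simp [walshD, walshW]
  | succ m ih =>
    have h : (2 : ℕ) ^ (m + 1) = 2 ^ m + 2 ^ m := by ring
    rw [h, walshD_split N m (2 ^ m) le_rfl x]
    rcases walshW_eq_one_or N (2 ^ m) x with hw | hw <;> rw [hw] <;> nlinarith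

lemma walshS_split (N m k : ℕ) (hk : k ≤ 2 ^ m) (x : Fin N → ZMod 2) :
    walshS N (2 ^ m + k) x =
      walshS N (2 ^ m) x + (k : ℤ) * walshD N (2 ^ m) x + walshW N (2 ^ m) x * walshS N k x := by
  unfold walshS
  rw [Finset.sum_range_add]
  have h : ∀ j ∈ Finset.range k, walshD N (2 ^ m + j) x =
      walshD N (2 ^ m) x + walshW N (2 ^ m) x * walshD N j x := fun j hj =>
    walshD_split N m j (le_of_lt (lt_of_lt_of_le (Finset.mem_range.mp hj) hk)) x
  rw [Finset.sum_congr rfl h, Finset.sum_add_distrib, Finset.sum_const, Finset.card_range,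
    ← Finset.mul_sum, nsmul_eq_mul, add_assoc]

lemma walshS_nonneg (N m : ℕ) (x : Fin N → ZMod 2) : 0 ≤ walshS N (2 ^ m) x := by
  induction m with
  | zero =>
    simp [walshS, walshD]
  | succ m ih =>
    have h : (2 : ℕ) ^ (m + 1) = 2 ^ m + 2 ^ m := by ring
    rw [h, walshS_split N m (2 ^ m) le_rfl x]
    have hd := walshD_nonneg N m x
    rcases walshW_eq_one_or N (2 ^ m) x with hw | hw <;> rw [hw] <;> nlinarith [pow_pos (by norm_num : (0:ℤ) < 2) m, Int.natCast_pos.mpr (pow_pos (by norm_num : 0 < 2) m)]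

lemma walshW_zero (N : ℕ) (x : Fin N → ZMod 2) : walshW N 0 x = 1 := by
  simp [walshW, Nat.zero_testBit]

lemma sum_walshW_eq_zero (N k : ℕ) (hk0 : k ≠ 0) (hk : k < 2 ^ N) :
    ∑ x : Fin N → ZMod 2, walshW N k x = 0 := by
  -- find a set bit below N
  obtain ⟨i, hi, -⟩ := Nat.exists_most_significant_bit hk0
  have hiN : i < N := by
    by_contra h
    have : k < 2 ^ i := lt_of_lt_of_le hk (Nat.pow_le_pow_right (by norm_num) (le_of_not_gt h))
    rw [Nat.testBit_lt_two_pow this] at hi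
    exact Bool.noConfusion hi
  set i₀ : Fin N := ⟨i, hiN⟩ with hi₀
  set φ : (Fin N → ZMod 2) → (Fin N → ZMod 2) := fun x => Function.update x i₀ (x i₀ + 1) with hφdef
  have haa : ∀ a : ZMod 2, a + 1 + 1 = a := by decide
  have hinv : Function.Involutive φ := by
    intro x
    funext j
    by_cases h : j = i₀
    · subst h; simp [φ, haa]
    · simp [φ, Function.update_of_ne h]
  have key : ∀ x : Fin N → ZMod 2, walshW N k (φ x) = - walshW N k x := by
    intro x
    unfold walshW
    set E : (Fin N → ZMod 2) → ℕ := fun y => ∑ j : Fin N, (if Nat.testBit k (j : ℕ) then 1 else 0) * (y j).val with hE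
    have hfun : (fun j : Fin N => (if Nat.testBit k (j : ℕ) then 1 else 0) * ((φ x) j).val)
        = Function.update (fun j : Fin N => (if Nat.testBit k (j : ℕ) then 1 else 0) * (x j).val) i₀ ((x i₀ + 1).val) := by
      funext j
      by_cases h : j = i₀
      · subst h
        simp [φ, hi₀, hi]
      · simp [φ, Function.update_of_ne h]
    have hEy : E (φ x) = (x i₀ + 1).val + ∑ j ∈ Finset.univ.erase i₀,
        (if Nat.testBit k (j : ℕ) then 1 else 0) * (x j).val := by
      rw [hE]
      simp only []
      rw [hfun, Finset.sum_update_of_mem (Finset.mem_univ i₀)]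
      rw [Finset.sdiff_singleton_eq_erase]
    have hEx : E x = (x i₀).val + ∑ j ∈ Finset.univ.erase i₀,
        (if Nat.testBit k (j : ℕ) then 1 else 0) * (x j).val := by
      rw [hE]
      simp only []
      rw [← Finset.add_sum_erase _ _ (Finset.mem_univ i₀)]
      simp [hi₀, hi]
    have hval' : ∀ a : ZMod 2, (a + 1).val + a.val = 1 := by decide
    have hval : (x i₀ + 1).val + (x i₀).val = 1 := hval' (x i₀)
    have hodd : Odd (E (φ x) + E x) := by
      rw [hEy, hEx]
      refine ⟨∑ j ∈ Finset.univ.erase i₀, (if Nat.testBit k (j : ℕ) then 1 else 0) * (x j).val, by omega⟩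
    have hpow : (-1 : ℤ) ^ (E (φ x) + E x) = -1 := hodd.neg_one_pow
    rw [pow_add] at hpow
    rcases Nat.even_or_odd (E x) with h | h
    · have h2 : Odd (E (φ x)) := by
        rcases Nat.even_or_odd (E (φ x)) with h' | h'
        · exfalso; rw [h'.neg_one_pow, h.neg_one_pow] at hpow; norm_num at hpow
        · exact h'
      rw [h2.neg_one_pow, h.neg_one_pow]
    · have h2 : Even (E (φ x)) := by
        rcases Nat.even_or_odd (E (φ x)) with h' | h'
        · exact h'
        · exfalso; rw [h'.neg_one_pow, h.neg_one_pow] at hpow; norm_num at hpow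
      rw [h2.neg_one_pow, h.neg_one_pow, neg_neg]
  have hsum : ∑ x : Fin N → ZMod 2, walshW N k x = - ∑ x : Fin N → ZMod 2, walshW N k x := by
    conv_lhs => rw [← Fintype.sum_bijective φ hinv.bijective _ (fun x => walshW N k x) (fun x => rfl)]
    simp only [key, Finset.sum_neg_distrib]
  omega

lemma sum_walshD (N j : ℕ) (hj1 : 1 ≤ j) (hj : j ≤ 2 ^ N) :
    ∑ x : Fin N → ZMod 2, walshD N j x = 2 ^ N := by
  unfold walshD
  rw [Finset.sum_comm]
  have h : ∀ k ∈ Finset.range j, ∑ x : Fin N → ZMod 2, walshW N k x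
      = if k = 0 then (2 ^ N : ℤ) else 0 := by
    intro k hk
    rw [Finset.mem_range] at hk
    by_cases h0 : k = 0
    · subst h0
      simp [walshW_zero, Fintype.card_fun]
    · simp [h0, sum_walshW_eq_zero N k h0 (lt_of_lt_of_le hk hj)]
  rw [Finset.sum_congr rfl h, Finset.sum_ite_eq' (Finset.range j) 0 (fun _ => (2 ^ N : ℤ))]
  rw [if_pos (Finset.mem_range.mpr (by omega))]

lemma sum_walshS (N n : ℕ) (hn : n ≤ 2 ^ N) :
    ∑ x : Fin N → ZMod 2, walshS N n x = ((n : ℤ) - 1) * 2 ^ N ∨ n = 0 := by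
  rcases Nat.eq_zero_or_pos n with h | h
  · right; exact h
  left
  unfold walshS
  rw [Finset.sum_comm]
  have hcongr : ∀ j ∈ Finset.range n, ∑ x : Fin N → ZMod 2, walshD N j x
      = if j = 0 then (0 : ℤ) else 2 ^ N := by
    intro j hj
    rw [Finset.mem_range] at hj
    by_cases h0 : j = 0
    · subst h0; simp [walshD]
    · simp [h0, sum_walshD N j (by omega) (le_of_lt (lt_of_lt_of_le hj hn))]
  rw [Finset.sum_congr rfl hcongr, Finset.sum_ite, Finset.sum_const, Finset.sum_const,
    smul_zero, zero_add]
  have hfe : (Finset.range n).filter (fun j => ¬ j = 0) = (Finset.range n).erase 0 := by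
    ext j; simp [Finset.mem_erase, and_comm]
  rw [hfe, Finset.card_erase_of_mem (Finset.mem_range.mpr h), nsmul_eq_mul,
    Finset.card_range, Nat.cast_sub (by omega : 1 ≤ n)]
  push_cast
  ring

lemma sum_abs_walshS_le (N : ℕ) : ∀ n : ℕ, 1 ≤ n → n ≤ 2 ^ N →
    ∑ x : Fin N → ZMod 2, |walshS N n x| ≤ (2 * (n : ℤ) - 1) * 2 ^ N := by
  intro n
  induction n using Nat.strong_induction_on with
  | _ n ih =>
  intro hn1 hn
  have hNpos : (0 : ℤ) < 2 ^ N := by positivity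
  set m := Nat.log 2 n with hmdef
  have hm1 : 2 ^ m ≤ n := Nat.pow_log_le_self 2 (by omega)
  have hm2 : n < 2 ^ (m + 1) := Nat.lt_pow_succ_log_self (by norm_num) n
  set k := n - 2 ^ m with hkdef
  have hnk : n = 2 ^ m + k := by omega
  have hkm : k < 2 ^ m := by rw [pow_succ] at hm2; omega
  have hmN : m ≤ N := by
    by_contra h
    have : 2 ^ N < 2 ^ m := Nat.pow_lt_pow_right (by norm_num) (by omega)
    omega
  by_cases hk0 : k = 0
  · -- n is a power of two
    have hn2 : n = 2 ^ m := by omega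
    have habs : ∀ x : Fin N → ZMod 2, |walshS N n x| = walshS N n x := by
      intro x
      rw [hn2]
      exact abs_of_nonneg (walshS_nonneg N m x)
    rw [Finset.sum_congr rfl (fun x _ => habs x)]
    rcases sum_walshS N n hn with h | h
    · rw [h]
      have : (0:ℤ) ≤ (n:ℤ) := by positivity
      nlinarith
    · omega
  · have hmN' : m < N := by
      by_contra h
      have h1 : 2 ^ N ≤ 2 ^ m := Nat.pow_le_pow_right (by norm_num) (by omega)
      omega
    have hbd : ∀ x : Fin N → ZMod 2, |walshS N n x| ≤
        walshS N (2 ^ m) x + (k : ℤ) * walshD N (2 ^ m) x + |walshS N k x| := by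
      intro x
      rw [hnk, walshS_split N m k (le_of_lt hkm) x]
      have h1 := walshS_nonneg N m x
      have h2 := walshD_nonneg N m x
      have h3 : |walshW N (2 ^ m) x * walshS N k x| = |walshS N k x| := by
        rcases walshW_eq_one_or N (2 ^ m) x with hw | hw <;> rw [hw] <;> simp
      refine le_trans (abs_add_le _ _) ?_
      rw [h3, abs_of_nonneg (add_nonneg h1 (mul_nonneg (by positivity) h2))]
    have hsum : ∑ x : Fin N → ZMod 2, |walshS N n x| ≤
        (∑ x : Fin N → ZMod 2, walshS N (2 ^ m) x)
        + (k : ℤ) * (∑ x : Fin N → ZMod 2, walshD N (2 ^ m) x)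
        + ∑ x : Fin N → ZMod 2, |walshS N k x| := by
      refine le_trans (Finset.sum_le_sum (fun x _ => hbd x)) (le_of_eq ?_)
      rw [Finset.sum_add_distrib, Finset.sum_add_distrib, ← Finset.mul_sum]
    have e1 : ∑ x : Fin N → ZMod 2, walshS N (2 ^ m) x = ((2 ^ m : ℤ) - 1) * 2 ^ N := by
      rcases sum_walshS N (2 ^ m) (Nat.pow_le_pow_right (by norm_num) hmN) with h | h
      · exact_mod_cast h
      · exact absurd h (Nat.pos_iff_ne_zero.mp (pow_pos (by norm_num) m))
    have e2 : ∑ x : Fin N → ZMod 2, walshD N (2 ^ m) x = 2 ^ N :=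
      sum_walshD N (2 ^ m) (Nat.one_le_two_pow) (Nat.pow_le_pow_right (by norm_num) hmN)
    have e3 : ∑ x : Fin N → ZMod 2, |walshS N k x| ≤ (2 * (k : ℤ) - 1) * 2 ^ N :=
      ih k (by omega) (by omega) (by omega)
    have hkc : ((n : ℤ)) = (2 ^ m : ℤ) + (k : ℤ) := by exact_mod_cast hnk
    have hkmc : ((k : ℤ)) < (2 ^ m : ℤ) := by exact_mod_cast hkm
    rw [e1, e2] at hsum
    calc ∑ x : Fin N → ZMod 2, |walshS N n x|
        ≤ ((2 ^ m : ℤ) - 1) * 2 ^ N + (k : ℤ) * 2 ^ N + (2 * (k : ℤ) - 1) * 2 ^ N := by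
          refine le_trans hsum ?_; linarith
      _ ≤ (2 * (n : ℤ) - 1) * 2 ^ N := by nlinarith

theorem walshFejer_L1_norm_le_two (N n : ℕ) (hn1 : 1 ≤ n) (hn : n ≤ 2^N) :
    (1 / 2^N : ℝ) * ∑ x : Fin N → ZMod 2,
      |(1/(n : ℝ)) * ∑ j ∈ Finset.range n,
        ((∑ k ∈ Finset.range j,
          (-1 : ℤ) ^ (∑ i : Fin N, (if Nat.testBit k (i : ℕ) then 1 else 0) * (x i).val) : ℤ) : ℝ)|
      ≤ 2 := by
  have hnR : (0 : ℝ) < (n : ℝ) := by exact_mod_cast hn1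
  have hNR : (0 : ℝ) < (2 : ℝ) ^ N := by positivity
  have hrw : ∀ x : Fin N → ZMod 2,
      (∑ j ∈ Finset.range n, ((∑ k ∈ Finset.range j,
        (-1 : ℤ) ^ (∑ i : Fin N, (if Nat.testBit k (i : ℕ) then 1 else 0) * (x i).val) : ℤ) : ℝ))
      = ((walshS N n x : ℤ) : ℝ) := by
    intro x
    simp only [walshS, walshD, walshW]
    push_cast
    rfl
  have habs : ∀ x : Fin N → ZMod 2,
      |(1/(n : ℝ)) * ((walshS N n x : ℤ) : ℝ)| = (1/(n : ℝ)) * |((walshS N n x : ℤ) : ℝ)| := by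
    intro x
    rw [abs_mul, abs_of_nonneg (by positivity)]
  have hsum : ∑ x : Fin N → ZMod 2, |((walshS N n x : ℤ) : ℝ)|
      ≤ (2 * (n : ℝ) - 1) * 2 ^ N := by
    have h := sum_abs_walshS_le N n hn1 hn
    have h2 : ((∑ x : Fin N → ZMod 2, |walshS N n x| : ℤ) : ℝ)
        ≤ (((2 * (n : ℤ) - 1) * 2 ^ N : ℤ) : ℝ) := by exact_mod_cast h
    push_cast at h2
    convert h2 using 2 <;> push_cast <;> ring
  calc (1 / 2^N : ℝ) * ∑ x : Fin N → ZMod 2,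
      |(1/(n : ℝ)) * ∑ j ∈ Finset.range n,
        ((∑ k ∈ Finset.range j,
          (-1 : ℤ) ^ (∑ i : Fin N, (if Nat.testBit k (i : ℕ) then 1 else 0) * (x i).val) : ℤ) : ℝ)|
      = (1 / 2^N : ℝ) * ∑ x : Fin N → ZMod 2, (1/(n : ℝ)) * |((walshS N n x : ℤ) : ℝ)| := by
        congr 1
        apply Finset.sum_congr rfl
        intro x _
        rw [hrw x, habs x]
    _ = (1 / 2^N : ℝ) * ((1/(n : ℝ)) * ∑ x : Fin N → ZMod 2, |((walshS N n x : ℤ) : ℝ)|) := by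
        simp only [Finset.mul_sum]
    _ ≤ (1 / 2^N : ℝ) * ((1/(n : ℝ)) * ((2 * (n : ℝ) - 1) * 2 ^ N)) := by
        apply mul_le_mul_of_nonneg_left _ (by positivity)
        exact mul_le_mul_of_nonneg_left hsum (by positivity)
    _ = (2 * (n : ℝ) - 1) / (n : ℝ) := by field_simp
    _ ≤ 2 := by
        rw [div_le_iff₀ hnR]
        linarith
end
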